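/- Let c ≥ 7, S = ℚ[x_i : i ∈ ℤ/cℤ], and let g_1, …, g_N be the quadric generating set of I_F consisting of the binomials q_i = x_i² − x_{i−1}x_{i−3} (i ∈ ℤ/cℤ) and the monomials m_t = x_a x_b over all pairs {a, b} of cyclic distance ≥ 3. Let Syz ⊆ S^N be the kernel of the map S^N → S sending the standard basis vector e_α to g_α, and let Z ⊆ Syz be the submodule generated by (i) all syzygies whose coordinates are all homogeneous linear forms, and (ii) all Koszul syzygies g_β e_α − g_α e_β. Then the quadratic syzygy u whose coordinate on the generator q_i is x_{i−1}x_{i−2} for each i ∈ ℤ/cℤ and whose coordinates on the monomial generators are 0 belongs to Syz but does NOT belong to Z. (This is the key step showing R = S/I_F is not Koszul.) -/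

import Mathlib

open MvPolynomial

/-- Index type for the monomial generators `x_a x_b` of `I_F`: pairs of cyclic
distance at least 3. -/
abbrev MonIdx (c : ℕ) [NeZero c] : Type :=
  {p : ZMod c × ZMod c // 3 ≤ (p.1 - p.2).val ∧ 3 ≤ (p.2 - p.1).val}

/-- Index type for the full quadric generating set of `I_F`: the binomials `q_i`
(indexed by `ℤ/cℤ`) together with the monomials `x_a x_b`. -/
abbrev GenIdx (c : ℕ) [NeZero c] : Type := ZMod c ⊕ MonIdx c

/-- The quadric generators of `I_F`: `q_i = x_i² − x_{i−1}x_{i−3}` and the monomials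
`x_a x_b` for pairs of cyclic distance `≥ 3`. -/
noncomputable def gens (c : ℕ) [NeZero c] : GenIdx c → MvPolynomial (ZMod c) ℚ :=
  Sum.elim (fun i => X i ^ 2 - X (i - 1) * X (i - 3))
    (fun p => X p.val.1 * X p.val.2)

/-- The quadratic syzygy `u`: coordinate `x_{i−1} x_{i−2}` on the generator `q_i`,
and `0` on each monomial generator. -/
noncomputable def uSyz (c : ℕ) [NeZero c] : GenIdx c → MvPolynomial (ZMod c) ℚ :=
  Sum.elim (fun i => X (i - 1) * X (i - 2)) (fun _ => 0)

/-- The submodule `Z` of the syzygy module generated by (i) all syzygies whose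
coordinates are homogeneous linear forms and (ii) all Koszul syzygies
`g_β e_α − g_α e_β`. -/
noncomputable def linKoszulSub (c : ℕ) [NeZero c] :
    Submodule (MvPolynomial (ZMod c) ℚ) (GenIdx c → MvPolynomial (ZMod c) ℚ) :=
  Submodule.span _
    ({v | (∑ α : GenIdx c, v α * gens c α = 0) ∧
        ∀ α : GenIdx c, v α ∈ homogeneousSubmodule (ZMod c) ℚ 1} ∪
     {v | ∃ α β : GenIdx c,
        v = gens c β • (Pi.single α 1 : GenIdx c → MvPolynomial (ZMod c) ℚ)
          - gens c α • (Pi.single β 1 : GenIdx c → MvPolynomial (ZMod c) ℚ)})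

set_option linter.unusedSectionVars false
set_option maxHeartbeats 1000000
section NKAuxSection

namespace NKAux
variable (c : ℕ) [NeZero c]


lemma ne1 (hc : 7 ≤ c) : (1 : ZMod c) ≠ 0 := by
  intro h
  have h' : ((1:ℕ) : ZMod c) = 0 := by push_cast; exact h
  rw [ZMod.natCast_eq_zero_iff] at h'
  have := Nat.le_of_dvd (by omega) h'; omega

lemma ne2 (hc : 7 ≤ c) : (2 : ZMod c) ≠ 0 := by
  intro h
  have h' : ((2:ℕ) : ZMod c) = 0 := by push_cast; exact h
  rw [ZMod.natCast_eq_zero_iff] at h'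
  have := Nat.le_of_dvd (by omega) h'; omega

lemma ne3 (hc : 7 ≤ c) : (3 : ZMod c) ≠ 0 := by
  intro h
  have h' : ((3:ℕ) : ZMod c) = 0 := by push_cast; exact h
  rw [ZMod.natCast_eq_zero_iff] at h'
  have := Nat.le_of_dvd (by omega) h'; omega

lemma ne4 (hc : 7 ≤ c) : (4 : ZMod c) ≠ 0 := by
  intro h
  have h' : ((4:ℕ) : ZMod c) = 0 := by push_cast; exact h
  rw [ZMod.natCast_eq_zero_iff] at h'
  have := Nat.le_of_dvd (by omega) h'; omega

lemma val1 (hc : 7 ≤ c) : (1 : ZMod c).val = 1 := by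
  have : Fact (1 < c) := ⟨by omega⟩
  exact ZMod.val_one c

lemma val2 (hc : 7 ≤ c) : (2 : ZMod c).val = 2 := by
  have h : ((2:ℕ) : ZMod c).val = 2 := ZMod.val_cast_of_lt (by omega)
  have h2 : ((2:ℕ) : ZMod c) = (2 : ZMod c) := by push_cast; ring
  rw [h2] at h; exact h

/-- support of `single x m + single y n` -/
lemma supp_two (x y : ZMod c) (m n : ℕ) (t : ZMod c)
    (h : (Finsupp.single x m + Finsupp.single y n) t ≠ 0) : t = x ∨ t = y := by
  classical
  by_cases hx : x = t
  · exact Or.inl hx.symm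
  by_cases hy : y = t
  · exact Or.inr hy.symm
  exfalso; apply h
  rw [Finsupp.add_apply, Finsupp.single_apply, Finsupp.single_apply, if_neg hx, if_neg hy]
  omega

/-- No far pair of variables divides a monomial supported on `{x, y}` with
`x - y ∈ {1, 2}`. -/
lemma far_not_le (hc : 7 ≤ c) (x y : ZMod c) (hxy : x - y = 1 ∨ x - y = 2)
    (m : MonIdx c) (ν : ZMod c →₀ ℕ) (hν : ∀ t, ν t ≠ 0 → t = x ∨ t = y) :
    ¬ (Finsupp.single m.val.1 1 + Finsupp.single m.val.2 1 ≤ ν) := by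
  classical
  obtain ⟨⟨a, b⟩, hm1, hm2⟩ := m
  simp only at hm1 hm2 ⊢
  intro hle
  have hab : a ≠ b := by
    intro h; rw [h, sub_self, ZMod.val_zero] at hm1; omega
  have hpa : 1 ≤ ν a := by
    have h := Finsupp.le_def.mp hle a
    rw [Finsupp.add_apply, Finsupp.single_apply, Finsupp.single_apply, if_pos rfl] at h
    split_ifs at h <;> omega
  have hpb : 1 ≤ ν b := by
    have h := Finsupp.le_def.mp hle b
    rw [Finsupp.add_apply, Finsupp.single_apply, Finsupp.single_apply, if_pos rfl] at h
    split_ifs at h <;> omega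
  have ha : a = x ∨ a = y := hν a (by omega)
  have hb : b = x ∨ b = y := hν b (by omega)
  rcases ha with ha | ha <;> rcases hb with hb | hb
  · exact hab (ha.trans hb.symm)
  · -- a = x, b = y : a - b = x - y small
    rcases hxy with hxy | hxy
    · have : (a - b).val = 1 := by rw [ha, hb, hxy, val1 c hc]
      omega
    · have : (a - b).val = 2 := by rw [ha, hb, hxy, val2 c hc]
      omega
  · -- a = y, b = x : b - a = x - y small
    rcases hxy with hxy | hxy
    · have : (b - a).val = 1 := by rw [ha, hb, hxy, val1 c hc]
      omega
    · have : (b - a).val = 2 := by rw [ha, hb, hxy, val2 c hc]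
      omega
  · exact hab (ha.trans hb.symm)

/-- `x_{k-1} x_{k-3}` never divides a monomial supported on `{x,y}` with `x - y = 1`. -/
lemma pairsub_not_le (hc : 7 ≤ c) (x y k : ZMod c) (hxy : x - y = 1)
    (ν : ZMod c →₀ ℕ) (hν : ∀ t, ν t ≠ 0 → t = x ∨ t = y) :
    ¬ (Finsupp.single (k - 1) 1 + Finsupp.single (k - 3) 1 ≤ ν) := by
  classical
  intro hle
  have hp1 : 1 ≤ ν (k - 1) := by
    have h := Finsupp.le_def.mp hle (k - 1)
    rw [Finsupp.add_apply, Finsupp.single_apply, Finsupp.single_apply, if_pos rfl] at h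
    split_ifs at h <;> omega
  have hp3 : 1 ≤ ν (k - 3) := by
    have h := Finsupp.le_def.mp hle (k - 3)
    rw [Finsupp.add_apply, Finsupp.single_apply, Finsupp.single_apply, if_pos rfl] at h
    split_ifs at h <;> omega
  have hk1 : k - 1 = x ∨ k - 1 = y := hν _ (by omega)
  have hk3 : k - 3 = x ∨ k - 3 = y := hν _ (by omega)
  rcases hk1 with h | h <;> rcases hk3 with h' | h'
  · exact ne2 c hc (by linear_combination h - h')
  · -- x - y = 2 from h,h' ; contradiction with hxy
    exact ne1 c hc (by linear_combination h - h' + hxy)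
  · -- y - x = 2
    exact ne3 c hc (by linear_combination h - h' - hxy)
  · exact ne2 c hc (by linear_combination h - h')


lemma X_mul_X_eq (a b : ZMod c) :
    (X a * X b : MvPolynomial (ZMod c) ℚ)
      = monomial (Finsupp.single a 1 + Finsupp.single b 1) 1 := by
  rw [X, X, monomial_mul, one_mul]

/-- `x_k^2` does not divide a monomial `single x 2 + single y 1` unless `k = x`. -/
lemma single2_not_le (x y k : ZMod c) (hk : k ≠ x) :
    ¬ (Finsupp.single k 2 ≤ Finsupp.single x 2 + Finsupp.single y 1) := by
  classical
  intro h
  have h' := Finsupp.le_def.mp h k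
  rw [Finsupp.add_apply, Finsupp.single_apply, Finsupp.single_apply,
    Finsupp.single_apply, if_pos rfl, if_neg (fun hx => hk hx.symm)] at h'
  split_ifs at h' <;> omega

/-- extraction of the coefficient of `x_i^2 x_{i-1}` from a syzygy. -/
lemma syz_coeff₁ (hc : 7 ≤ c) (v : GenIdx c → MvPolynomial (ZMod c) ℚ)
    (hv : ∑ α : GenIdx c, v α * gens c α = 0) (i : ZMod c) :
    coeff (Finsupp.single (i - 1) 1) (v (Sum.inl i)) = 0 := by
  classical
  set ν : ZMod c →₀ ℕ := Finsupp.single i 2 + Finsupp.single (i - 1) 1 with hνdef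
  have hsupp : ∀ t, ν t ≠ 0 → t = i ∨ t = i - 1 := fun t ht => supp_two c i (i-1) 2 1 t ht
  have h0 : coeff ν (∑ α : GenIdx c, v α * gens c α) = 0 := by rw [hv, coeff_zero]
  rw [coeff_sum, Fintype.sum_sum_type] at h0
  have hinr : ∀ m : MonIdx c, coeff ν (v (Sum.inr m) * gens c (Sum.inr m)) = 0 := by
    intro m
    have hg : gens c (Sum.inr m)
        = monomial (Finsupp.single m.val.1 1 + Finsupp.single m.val.2 1) 1 := by
      simp only [gens, Sum.elim_inr]; exact X_mul_X_eq c _ _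
    rw [hg, coeff_mul_monomial',
      if_neg (far_not_le c hc i (i-1) (Or.inl (by ring)) m ν hsupp)]
  rw [Finset.sum_eq_zero (fun m _ => hinr m), add_zero] at h0
  have hinl : ∀ k : ZMod c, coeff ν (v (Sum.inl k) * gens c (Sum.inl k))
      = (if Finsupp.single k 2 ≤ ν then coeff (ν - Finsupp.single k 2) (v (Sum.inl k)) else 0) := by
    intro k
    simp only [gens, Sum.elim_inl]
    rw [mul_sub, coeff_sub, X_pow_eq_monomial, coeff_mul_monomial', X_mul_X_eq,
      coeff_mul_monomial', if_neg (pairsub_not_le c hc i (i-1) k (by ring) ν hsupp)]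
    split_ifs with h
    · rw [mul_one, sub_zero]
    · rw [sub_zero]
  rw [Finset.sum_congr rfl (fun k _ => hinl k)] at h0
  rw [Finset.sum_eq_single i
    (fun k _ hk => if_neg (single2_not_le c i (i-1) k hk))
    (fun h => absurd (Finset.mem_univ i) h)] at h0
  rw [if_pos (le_add_right le_rfl), add_tsub_cancel_left] at h0
  exact h0

/-- extraction of the coefficient of `x_i^2 x_{i-2}` from a syzygy. -/
lemma syz_coeff₂ (hc : 7 ≤ c) (v : GenIdx c → MvPolynomial (ZMod c) ℚ)
    (hv : ∑ α : GenIdx c, v α * gens c α = 0) (i : ZMod c) :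
    coeff (Finsupp.single (i - 2) 1) (v (Sum.inl i))
      = coeff (Finsupp.single i 1) (v (Sum.inl (i + 1))) := by
  classical
  set ν : ZMod c →₀ ℕ := Finsupp.single i 2 + Finsupp.single (i - 2) 1 with hνdef
  have hsupp : ∀ t, ν t ≠ 0 → t = i ∨ t = i - 2 := fun t ht => supp_two c i (i-2) 2 1 t ht
  have h0 : coeff ν (∑ α : GenIdx c, v α * gens c α) = 0 := by rw [hv, coeff_zero]
  rw [coeff_sum, Fintype.sum_sum_type] at h0
  have hinr : ∀ m : MonIdx c, coeff ν (v (Sum.inr m) * gens c (Sum.inr m)) = 0 := by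
    intro m
    have hg : gens c (Sum.inr m)
        = monomial (Finsupp.single m.val.1 1 + Finsupp.single m.val.2 1) 1 := by
      simp only [gens, Sum.elim_inr]; exact X_mul_X_eq c _ _
    rw [hg, coeff_mul_monomial',
      if_neg (far_not_le c hc i (i-2) (Or.inr (by ring)) m ν hsupp)]
  rw [Finset.sum_eq_zero (fun m _ => hinr m), add_zero] at h0
  have hinl : ∀ k : ZMod c, coeff ν (v (Sum.inl k) * gens c (Sum.inl k))
      = (if Finsupp.single k 2 ≤ ν then coeff (ν - Finsupp.single k 2) (v (Sum.inl k)) else 0)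
        - (if Finsupp.single (k-1) 1 + Finsupp.single (k-3) 1 ≤ ν then
             coeff (ν - (Finsupp.single (k-1) 1 + Finsupp.single (k-3) 1)) (v (Sum.inl k)) else 0) := by
    intro k
    simp only [gens, Sum.elim_inl]
    rw [mul_sub, coeff_sub, X_pow_eq_monomial, coeff_mul_monomial', X_mul_X_eq,
      coeff_mul_monomial']
    split_ifs <;> simp
  rw [Finset.sum_congr rfl (fun k _ => hinl k), Finset.sum_sub_distrib] at h0
  rw [Finset.sum_eq_single i
    (fun k _ hk => if_neg (single2_not_le c i (i-2) k hk))
    (fun h => absurd (Finset.mem_univ i) h)] at h0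
  rw [if_pos (le_add_right le_rfl), add_tsub_cancel_left] at h0
  -- second sum
  have hB : ∀ k : ZMod c, k ∈ Finset.univ → k ≠ i + 1 →
      (if Finsupp.single (k-1) 1 + Finsupp.single (k-3) 1 ≤ ν then
        coeff (ν - (Finsupp.single (k-1) 1 + Finsupp.single (k-3) 1)) (v (Sum.inl k)) else 0) = 0 := by
    intro k _ hk
    rw [if_neg]
    intro hle
    have hp1 : 1 ≤ ν (k - 1) := by
      have h := Finsupp.le_def.mp hle (k - 1)
      rw [Finsupp.add_apply, Finsupp.single_apply, Finsupp.single_apply, if_pos rfl] at h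
      split_ifs at h <;> omega
    have hp3 : 1 ≤ ν (k - 3) := by
      have h := Finsupp.le_def.mp hle (k - 3)
      rw [Finsupp.add_apply, Finsupp.single_apply, Finsupp.single_apply, if_pos rfl] at h
      split_ifs at h <;> omega
    have hk1 : k - 1 = i ∨ k - 1 = i - 2 := hsupp _ (by omega)
    have hk3 : k - 3 = i ∨ k - 3 = i - 2 := hsupp _ (by omega)
    rcases hk1 with h | h
    · exact hk (by linear_combination h)
    rcases hk3 with h' | h'
    · exact ne4 c hc (by linear_combination h - h')
    · exact ne2 c hc (by linear_combination h - h')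
  rw [Finset.sum_eq_single (i + 1) hB (fun h => absurd (Finset.mem_univ _) h)] at h0
  have e1 : (i + 1) - 1 = i := by ring
  have e3 : (i + 1) - 3 = i - 2 := by ring
  rw [e1, e3] at h0
  have hle2 : Finsupp.single i 1 + Finsupp.single (i-2) 1 ≤ ν := by
    rw [Finsupp.le_def]
    intro t
    simp only [hνdef, Finsupp.add_apply, Finsupp.single_apply]
    split_ifs <;> omega
  rw [if_pos hle2] at h0
  have hsub : ν - (Finsupp.single i 1 + Finsupp.single (i-2) 1) = Finsupp.single i 1 := by
    ext t
    simp only [hνdef, Finsupp.tsub_apply, Finsupp.add_apply, Finsupp.single_apply]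
    split_ifs <;> omega
  rw [hsub] at h0
  linarith [h0]


/-- the exponent vector of `x_{i-1} x_{i-2}`. -/
noncomputable def mu (i : ZMod c) : ZMod c →₀ ℕ :=
  Finsupp.single (i - 1) 1 + Finsupp.single (i - 2) 1

/-- No quadric generator has a coefficient on the monomial `x_{i-1}x_{i-2}`,
even after multiplying by an arbitrary polynomial. -/
lemma coeff_mu_mul_gens (hc : 7 ≤ c) (i : ZMod c) (p : MvPolynomial (ZMod c) ℚ)
    (γ : GenIdx c) : coeff (mu c i) (p * gens c γ) = 0 := by
  classical
  have hsupp : ∀ t, mu c i t ≠ 0 → t = i - 1 ∨ t = i - 2 :=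
    fun t ht => supp_two c (i-1) (i-2) 1 1 t ht
  cases γ with
  | inl k =>
    simp only [gens, Sum.elim_inl]
    rw [mul_sub, coeff_sub, X_pow_eq_monomial, coeff_mul_monomial', X_mul_X_eq,
      coeff_mul_monomial',
      if_neg (pairsub_not_le c hc (i-1) (i-2) k (by ring) (mu c i) hsupp)]
    rw [if_neg, sub_zero]
    intro hle
    have h := Finsupp.le_def.mp hle k
    simp only [mu, Finsupp.add_apply, Finsupp.single_apply, if_true] at h
    split_ifs at h with h1 h2 h2
    · exact ne1 c hc (by linear_combination h1 - h2)
    · omega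
    · omega
    · omega
  | inr m =>
    simp only [gens, Sum.elim_inr]
    rw [X_mul_X_eq, coeff_mul_monomial',
      if_neg (far_not_le c hc (i-1) (i-2) (Or.inl (by ring)) m (mu c i) hsupp)]

/-- If `f` is a linear form whose coefficients on `x_{i-1}` and `x_{i-2}` vanish,
then `p * f` has no monomial `x_{i-1} x_{i-2}`. -/
lemma coeff_mu_mul_homog (hc : 7 ≤ c) (i : ZMod c) (p f : MvPolynomial (ZMod c) ℚ)
    (hf : f ∈ homogeneousSubmodule (ZMod c) ℚ 1)
    (h1 : coeff (Finsupp.single (i - 1) 1) f = 0)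
    (h2 : coeff (Finsupp.single (i - 2) 1) f = 0) :
    coeff (mu c i) (p * f) = 0 := by
  classical
  rw [coeff_mul]
  apply Finset.sum_eq_zero
  rintro ⟨d, e⟩ hde
  rw [Finset.HasAntidiagonal.mem_antidiagonal] at hde
  suffices h : coeff e f = 0 by
    simp only [h, mul_zero]
  by_cases hdeg : e.degree = 1
  · have hle : e ≤ mu c i := hde ▸ (le_add_self : e ≤ d + e)
    have hne : i - 1 ≠ i - 2 := fun h => ne1 c hc (by linear_combination h)
    have hept := Finsupp.le_def.mp hle
    have hz : ∀ t, t ≠ i - 1 → t ≠ i - 2 → e t = 0 := by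
      intro t ht1 ht2
      have hmu : mu c i t = 0 := by
        rw [mu, Finsupp.add_apply, Finsupp.single_apply, Finsupp.single_apply,
          if_neg (fun h => ht1 h.symm), if_neg (fun h => ht2 h.symm)]
        omega
      have := hept t
      omega
    have hdeg' : e (i - 1) + e (i - 2) = 1 := by
      have hsub : e.support ⊆ {i - 1, i - 2} := by
        intro t ht
        rw [Finsupp.mem_support_iff] at ht
        rw [Finset.mem_insert, Finset.mem_singleton]
        by_contra hcon
        push_neg at hcon
        exact ht (hz t hcon.1 hcon.2)
      have hdd : e.degree = ∑ t ∈ ({i - 1, i - 2} : Finset (ZMod c)), e t :=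
        Finset.sum_subset hsub (fun t _ ht => Finsupp.notMem_support_iff.mp ht)
      rw [Finset.sum_pair hne] at hdd
      rw [← hdd, hdeg]
    have hcases : e = Finsupp.single (i - 1) 1 ∨ e = Finsupp.single (i - 2) 1 := by
      by_cases hc1 : e (i - 1) = 1
      · left
        ext t
        rw [Finsupp.single_apply]
        by_cases ht1 : t = i - 1
        · rw [if_pos ht1.symm, ht1, hc1]
        · rw [if_neg (fun h => ht1 h.symm)]
          by_cases ht2 : t = i - 2
          · rw [ht2]; omega
          · exact hz t ht1 ht2
      · right
        have hc2 : e (i - 2) = 1 := by omega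
        have hc1' : e (i - 1) = 0 := by omega
        ext t
        rw [Finsupp.single_apply]
        by_cases ht2 : t = i - 2
        · rw [if_pos ht2.symm, ht2, hc2]
        · rw [if_neg (fun h => ht2 h.symm)]
          by_cases ht1 : t = i - 1
          · rw [ht1]; omega
          · exact hz t ht1 ht2
    rcases hcases with h | h <;> rw [h] <;> assumption
  · exact ((mem_homogeneousSubmodule _ _).mp hf).coeff_eq_zero hdeg

/-- The key linear functional. -/
noncomputable def Psi (w : GenIdx c → MvPolynomial (ZMod c) ℚ) : ℚ :=
  ∑ i : ZMod c, coeff (mu c i) (w (Sum.inl i))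

lemma Psi_add (a b : GenIdx c → MvPolynomial (ZMod c) ℚ) :
    Psi c (a + b) = Psi c a + Psi c b := by
  simp only [Psi, Pi.add_apply, coeff_add, Finset.sum_add_distrib]

lemma Psi_u (hc : 7 ≤ c) : Psi c (uSyz c) = (c : ℚ) := by
  classical
  have h : ∀ i : ZMod c, coeff (mu c i) (uSyz c (Sum.inl i)) = 1 := by
    intro i
    simp only [uSyz, Sum.elim_inl]
    simp only [mu]
    rw [X_mul_X_eq, coeff_monomial, if_pos rfl]
  rw [Psi]
  rw [Finset.sum_congr rfl (fun i _ => h i), Finset.sum_const, Finset.card_univ,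
    ZMod.card, nsmul_eq_mul, mul_one]


/-- The submodule of tuples killed by `Ψ` after multiplication by any polynomial. -/
noncomputable def Tsub : Submodule (MvPolynomial (ZMod c) ℚ)
    (GenIdx c → MvPolynomial (ZMod c) ℚ) where
  carrier := {w | ∀ p : MvPolynomial (ZMod c) ℚ, Psi c (p • w) = 0}
  add_mem' := by
    intro a b ha hb p
    have h : p • (a + b) = p • a + p • b := smul_add p a b
    rw [h]
    have : Psi c (p • a + p • b) = Psi c (p • a) + Psi c (p • b) := by
      simp only [Psi, Pi.add_apply, coeff_add, Finset.sum_add_distrib]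
    rw [this, ha p, hb p, add_zero]
  zero_mem' := by
    intro p
    rw [smul_zero]
    simp [Psi]
  smul_mem' := by
    intro r w hw p
    rw [smul_smul]
    exact hw (p * r)

lemma gen_subset (hc : 7 ≤ c) :
    ({v | (∑ α : GenIdx c, v α * gens c α = 0) ∧
        ∀ α : GenIdx c, v α ∈ homogeneousSubmodule (ZMod c) ℚ 1} ∪
     {v | ∃ α β : GenIdx c,
        v = gens c β • (Pi.single α 1 : GenIdx c → MvPolynomial (ZMod c) ℚ)
          - gens c α • (Pi.single β 1 : GenIdx c → MvPolynomial (ZMod c) ℚ)})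
      ⊆ (Tsub c : Set (GenIdx c → MvPolynomial (ZMod c) ℚ)) := by
  classical
  rintro v (⟨hv1, hv2⟩ | ⟨α, β, rfl⟩) <;> intro p
  · -- linear syzygy
    apply Finset.sum_eq_zero
    intro i _
    have hp : (p • v) (Sum.inl i) = p * v (Sum.inl i) := rfl
    rw [hp]
    refine coeff_mu_mul_homog c hc i p (v (Sum.inl i)) (hv2 (Sum.inl i))
      (syz_coeff₁ c hc v hv1 i) ?_
    rw [syz_coeff₂ c hc v hv1 i]
    have h := syz_coeff₁ c hc v hv1 (i + 1)
    rwa [show (i + 1) - 1 = i from by ring] at h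
  · -- Koszul syzygy
    apply Finset.sum_eq_zero
    intro i _
    have hp : (p • (gens c β • (Pi.single α 1 : GenIdx c → MvPolynomial (ZMod c) ℚ)
        - gens c α • (Pi.single β 1 : GenIdx c → MvPolynomial (ZMod c) ℚ))) (Sum.inl i)
        = p * (gens c β * ((Pi.single α 1 : GenIdx c → MvPolynomial (ZMod c) ℚ) (Sum.inl i)))
          - p * (gens c α * ((Pi.single β 1 : GenIdx c → MvPolynomial (ZMod c) ℚ) (Sum.inl i))) := by
      simp only [Pi.smul_apply, Pi.sub_apply, smul_eq_mul, mul_sub]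
    rw [hp, coeff_sub]
    have hz : ∀ γ δ : GenIdx c,
        coeff (mu c i) (p * (gens c γ * (Pi.single δ 1 : GenIdx c → MvPolynomial (ZMod c) ℚ) (Sum.inl i))) = 0 := by
      intro γ δ
      rw [Pi.single_apply]
      split_ifs with h
      · rw [mul_one]
        exact coeff_mu_mul_gens c hc i p γ
      · rw [mul_zero, mul_zero, coeff_zero]
    rw [hz α β, hz β α, sub_zero]


theorem main (hc : 7 ≤ c) :
    (∑ α : GenIdx c, uSyz c α * gens c α = 0) ∧ uSyz c ∉ linKoszulSub c := by
  classical
  constructor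
  · rw [Fintype.sum_sum_type]
    have h2 : ∑ m : MonIdx c, uSyz c (Sum.inr m) * gens c (Sum.inr m) = 0 :=
      Finset.sum_eq_zero (fun m _ => by simp [uSyz])
    rw [h2, add_zero]
    have h1 : ∀ i : ZMod c, uSyz c (Sum.inl i) * gens c (Sum.inl i)
        = (X (i-1) * X (i-2) * (X i ^ 2) : MvPolynomial (ZMod c) ℚ)
          - X (i-1) * X (i-2) * (X (i-1) * X (i-3)) := by
      intro i
      simp only [uSyz, gens, Sum.elim_inl]
      ring
    rw [Finset.sum_congr rfl (fun i _ => h1 i), Finset.sum_sub_distrib, sub_eq_zero]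
    have h3 := Equiv.sum_comp (Equiv.addRight (1 : ZMod c))
      (fun i => (X (i-1) * X (i-2) * (X (i-1) * X (i-3)) : MvPolynomial (ZMod c) ℚ))
    rw [← h3]
    apply Finset.sum_congr rfl
    intro i _
    simp only [Equiv.coe_addRight]
    rw [show i + 1 - 1 = i from by ring, show i + 1 - 2 = i - 1 from by ring,
      show i + 1 - 3 = i - 2 from by ring]
    ring
  · intro hu
    have hle : linKoszulSub c ≤ Tsub c := Submodule.span_le.mpr (gen_subset c hc)
    have h := hle hu 1
    rw [one_smul, Psi_u c hc] at h
    have : (c : ℚ) ≠ 0 := by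
      simp only [ne_eq, Nat.cast_eq_zero]
      omega
    exact this h


end NKAux

end NKAuxSection

/-- For `c ≥ 7`, the quadratic tuple `u` is a first syzygy on the quadric generators
of `I_F`, but it does not belong to the submodule `Z` generated by the linear
syzygies and the Koszul syzygies.  This is the key step showing `S/I_F` is not
Koszul. -/
theorem uSyz_is_syzygy_not_in_linKoszul (c : ℕ) (hc : 7 ≤ c) [NeZero c] :
    (∑ α : GenIdx c, uSyz c α * gens c α = 0) ∧ uSyz c ∉ linKoszulSub c :=
  NKAux.main c hc
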